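/- arXiv:1308.4881 — 4 statements merged into one kernel-verified Lean document; each statement's English description precedes it below -/
import Mathlib

section
/- Let −2 ≤ α ≤ 0 and x ∈ [0,1). Then x(1 − x − αx) − (1−x)φ(x) ≥ 0. -/
open Real Set

/-- `φ(x) = ∫₀ˣ (1-t)^α dt`. -/
noncomputable def phi (α : ℝ) (x : ℝ) : ℝ := ∫ t in (0 : ℝ)..x, (1 - t) ^ α

/-- Key pointwise bound: for `0 < s ≤ 1` and `-2 ≤ α ≤ 0`, `s^(α+2) ≤ -α + (α+1)s²`. -/
lemma key_rpow (α s : ℝ) (hα₁ : -2 ≤ α) (hα₂ : α ≤ 0) (hs0 : 0 < s) (hs1 : s ≤ 1) :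
    s ^ (α + 2) ≤ -α + (α + 1) * s ^ 2 := by
  have hgm : s ^ (α + 2) ≤ -α/2 + (α+2)/2 * s^2 := by
    have h := Real.geom_mean_le_arith_mean2_weighted (w₁ := -α/2) (w₂ := (α+2)/2)
      (p₁ := 1) (p₂ := s^2) (by linarith) (by linarith) zero_le_one (sq_nonneg s) (by ring)
    calc s ^ (α + 2) = (s ^ 2 : ℝ) ^ ((α+2)/2) := by
          rw [← Real.rpow_natCast s 2, ← Real.rpow_mul hs0.le]
          congr 1
          push_cast
          ring
      _ = (1 : ℝ) ^ (-α/2 : ℝ) * (s ^ 2) ^ ((α+2)/2) := by rw [Real.one_rpow, one_mul]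
      _ ≤ -α/2 * 1 + (α+2)/2 * s^2 := h
      _ = -α/2 + (α+2)/2 * s^2 := by ring
  nlinarith [sq_nonneg s, mul_nonneg (neg_nonneg.2 hα₂) (by nlinarith : (0:ℝ) ≤ 1 - s^2)]

/-- For `-2 ≤ α ≤ 0` and `x ∈ [0,1)`, `x(1 - x - αx) - (1-x)φ(x) ≥ 0`. -/
theorem g1_nonneg (α : ℝ) (hα₁ : -2 ≤ α) (hα₂ : α ≤ 0)
    (x : ℝ) (hx : x ∈ Ico (0 : ℝ) 1) :
    0 ≤ x * (1 - x - α * x) - (1 - x) * phi α x := by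
  obtain ⟨hx0, hx1⟩ := hx
  set h : ℝ → ℝ := fun t => (t - (1+α)*t^2) / (1-t) with hhdef
  set d : ℝ → ℝ :=
    fun t => ((1 - 2*(1+α)*t)*(1-t) + (t - (1+α)*t^2)) / (1-t)^2 with hddef
  have hne : ∀ t ∈ Set.uIcc (0:ℝ) x, (1:ℝ) - t ≠ 0 := by
    intro t ht
    rw [Set.uIcc_of_le hx0] at ht
    have := ht.2
    intro hc; nlinarith
  -- derivative of h is d on [0, x]
  have hderiv : ∀ t ∈ Set.uIcc (0:ℝ) x, HasDerivAt h (d t) t := by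
    intro t ht
    have ht1 : (1:ℝ) - t ≠ 0 := hne t ht
    have hu : HasDerivAt (fun t : ℝ => t - (1+α)*t^2) (1 - 2*(1+α)*t) t := by
      have h1 := (hasDerivAt_id t).sub ((hasDerivAt_pow 2 t).const_mul (1+α))
      convert h1 using 1
      · rfl
      · rfl
      · rfl
      simp; ring
    have hv : HasDerivAt (fun t : ℝ => 1 - t) (-1) t := by
      simpa using (hasDerivAt_id t).const_sub 1
    have hthis := hu.div hv ht1
    have hdt : d t = ((1 - 2*(1+α)*t)*(1-t) - (t - (1+α)*t^2) * (-1)) / (1-t)^2 := by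
      simp only [hddef]
      ring
    rw [hhdef, hdt]
    exact hthis
  -- continuity / integrability of d
  have hdc : ContinuousOn d (Set.uIcc (0:ℝ) x) := by
    apply ContinuousOn.div
    · exact (Continuous.continuousOn (by continuity))
    · exact (Continuous.continuousOn (by continuity))
    · intro t ht
      exact pow_ne_zero 2 (hne t ht)
  have hdint : IntervalIntegrable d MeasureTheory.volume 0 x := hdc.intervalIntegrable
  -- continuity / integrability of the integrand
  have hfc : ContinuousOn (fun t : ℝ => (1 - t) ^ α) (Set.uIcc (0:ℝ) x) := by
    apply ContinuousOn.rpow_const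
    · exact Continuous.continuousOn (by continuity)
    · intro t ht
      exact Or.inl (hne t ht)
  have hfint : IntervalIntegrable (fun t : ℝ => (1 - t) ^ α) MeasureTheory.volume 0 x :=
    hfc.intervalIntegrable
  -- FTC
  have hftc : ∫ t in (0:ℝ)..x, d t = h x - h 0 :=
    intervalIntegral.integral_eq_sub_of_hasDerivAt hderiv hdint
  have hh0 : h 0 = 0 := by simp [hhdef]
  -- pointwise bound
  have hpt : ∀ t ∈ Set.Icc (0:ℝ) x, (1 - t) ^ α ≤ d t := by
    intro t ht
    have hs0 : 0 < 1 - t := by nlinarith [ht.2]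
    have hs1 : 1 - t ≤ 1 := by nlinarith [ht.1]
    have hnum : (1 - 2*(1+α)*t)*(1-t) + (t - (1+α)*t^2) = -α + (α+1)*(1-t)^2 := by ring
    have hkey := key_rpow α (1 - t) hα₁ hα₂ hs0 hs1
    have heq : (1 - t) ^ α = (1 - t) ^ (α + 2) / (1 - t) ^ 2 := by
      rw [← Real.rpow_natCast (1 - t) 2, ← Real.rpow_sub hs0]
      norm_num
    rw [hddef]
    simp only []
    rw [hnum, heq]
    exact (div_le_div_iff_of_pos_right (by positivity)).mpr hkey
  -- compare integrals
  have hmono : phi α x ≤ ∫ t in (0:ℝ)..x, d t := by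
    unfold phi
    exact intervalIntegral.integral_mono_on hx0 hfint hdint hpt
  have hphi : phi α x ≤ h x := by rw [hftc, hh0, sub_zero] at hmono; exact hmono
  have hx1' : (0:ℝ) < 1 - x := by linarith
  have hhx : (1 - x) * h x = x - (1+α)*x^2 := by
    rw [hhdef]
    field_simp
  have := mul_le_mul_of_nonneg_left hphi hx1'.le
  nlinarith [this]
end

section
/- Let −2 ≤ α ≤ 0 and x ∈ [0,1). Then (α+2)φ(x)² − 2(1 + x + αx)φ(x) + 2x ≥ 0. -/
open Real Set

namespace G2Aux

lemma contAt {α t : ℝ} (ht : t < 1) :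
    ContinuousAt (fun t : ℝ => (1 - t) ^ α) t := by
  have h1 : (1 : ℝ) - t ≠ 0 := by linarith
  exact (Real.continuousAt_rpow_const _ _ (Or.inl h1)).comp
    ((continuous_const.sub continuous_id).continuousAt)

lemma integrable {α x : ℝ} (hx : x < 1) :
    IntervalIntegrable (fun t : ℝ => (1 - t) ^ α) MeasureTheory.volume 0 x := by
  apply ContinuousOn.intervalIntegrable
  intro t ht
  have ht1 : t < 1 := by
    rcases ht with ⟨_, h2⟩
    exact lt_of_le_of_lt h2 (by simpa using max_lt one_pos hx)
  exact (contAt ht1).continuousWithinAt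

lemma hasDerivAt_phi {α x : ℝ} (hx : x < 1) :
    HasDerivAt (phi α) ((1 - x) ^ α) x := by
  have := intervalIntegral.integral_hasDerivAt_right (f := fun t : ℝ => (1 - t) ^ α)
    (a := 0) (b := x) (integrable hx)
    (ContinuousAt.stronglyMeasurableAtFilter (s := Iio 1) isOpen_Iio
      (fun t ht => contAt ht) x hx)
    (contAt hx)
  exact this

lemma phi_nonneg {α x : ℝ} (hx0 : 0 ≤ x) (hx1 : x < 1) : 0 ≤ phi α x := by
  apply intervalIntegral.integral_nonneg hx0
  intro t ht
  exact Real.rpow_nonneg (by linarith [ht.2]) _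

lemma phi_eq {α x : ℝ} (hα : α ≠ -1) (hx0 : 0 ≤ x) (hx1 : x < 1) :
    phi α x = (1 - (1 - x) ^ (α + 1)) / (α + 1) := by
  rw [phi, show (fun t : ℝ => (1 - t) ^ α) = (fun t : ℝ => ((1 : ℝ) - t) ^ α) from rfl]
  rw [intervalIntegral.integral_comp_sub_left (fun u : ℝ => u ^ α) 1]
  rw [integral_rpow (Or.inr ⟨hα, by
    intro h
    rcases h with ⟨h1, h2⟩
    simp only [min_le_iff, le_max_iff] at h1 h2
    rcases h1 with h | h <;> linarith⟩)]
  rw [show (1 : ℝ) - 0 = 1 by ring, Real.one_rpow]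

lemma bern_le {s β : ℝ} (hs0 : 0 ≤ s) (hβ0 : 0 ≤ β) (hβ1 : β ≤ 1) :
    s ^ β ≤ 1 + β * (s - 1) := by
  have h := rpow_one_add_le_one_add_mul_self (s := s - 1) (by linarith) hβ0 hβ1
  have h1 : (1 : ℝ) + (s - 1) = s := by ring
  rwa [h1] at h

lemma bern_ge_neg {s β : ℝ} (hs0 : 0 < s) (hs1 : s ≤ 1) (hβ : -1 ≤ β) (hβ0 : β ≤ 0) :
    1 + β * (s - 1) ≤ s ^ β := by
  have h1 : s ^ (-β) ≤ 1 + (-β) * (s - 1) := bern_le hs0.le (by linarith) (by linarith)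
  have hspos : 0 < s ^ (-β) := Real.rpow_pos_of_pos hs0 _
  have h2 : s ^ β = 1 / s ^ (-β) := by
    rw [one_div, ← Real.rpow_neg hs0.le, neg_neg]
  have h3 : 0 ≤ 1 + β * (s - 1) := by nlinarith
  rw [h2, le_div_iff₀ hspos]
  nlinarith [mul_le_mul_of_nonneg_left h1 h3, sq_nonneg (β * (s - 1))]

lemma rpow_ge_self {s β : ℝ} (hs0 : 0 < s) (hs1 : s ≤ 1) (hβ : β ≤ 1) : s ≤ s ^ β := by
  calc s = s ^ (1 : ℝ) := (Real.rpow_one s).symm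
  _ ≤ s ^ β := Real.rpow_le_rpow_of_exponent_ge hs0 hs1 hβ

lemma H_nonneg {s β : ℝ} (hs0 : 0 < s) (hs1 : s ≤ 1) (hβ0 : 0 < β) (hβ1 : β ≤ 1) :
    0 ≤ (2 * β - 1) * s ^ β + (β - 1) ^ 2 - β ^ 2 * s := by
  rcases le_or_gt (2 * β) 1 with h | h
  · have hb := bern_le hs0.le hβ0.le hβ1
    have h1 : (2 * β - 1) * (1 + β * (s - 1)) ≤ (2 * β - 1) * s ^ β :=
      mul_le_mul_of_nonpos_left hb (by linarith)
    nlinarith [mul_nonneg (mul_nonneg hβ0.le (by linarith : (0:ℝ) ≤ 1 - β))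
        (by linarith : (0:ℝ) ≤ 1 - s),
      mul_nonneg (by linarith : (0:ℝ) ≤ 1 - β) (by linarith : (0:ℝ) ≤ 1 - 2 * β)]
  · have hb := rpow_ge_self hs0 hs1 hβ1
    have h1 : (2 * β - 1) * s ≤ (2 * β - 1) * s ^ β :=
      mul_le_mul_of_nonneg_left hb (by linarith)
    nlinarith [mul_nonneg (sq_nonneg (β - 1)) (by linarith : (0:ℝ) ≤ 1 - s)]

lemma H_nonpos {s β : ℝ} (hs0 : 0 < s) (hs1 : s ≤ 1) (hβ0 : -1 ≤ β) (hβ1 : β < 0) :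
    (2 * β - 1) * s ^ β + (β - 1) ^ 2 - β ^ 2 * s ≤ 0 := by
  have hb := bern_ge_neg hs0 hs1 hβ0 hβ1.le
  have h1 : (2 * β - 1) * s ^ β ≤ (2 * β - 1) * (1 + β * (s - 1)) :=
    mul_le_mul_of_nonpos_left hb (by linarith)
  nlinarith [mul_nonneg (mul_nonneg (by linarith : (0:ℝ) ≤ -β)
      (by linarith : (0:ℝ) ≤ 1 - β)) (by linarith : (0:ℝ) ≤ 1 - s)]

lemma K_aux {s β : ℝ} (hs0 : 0 < s) (hs1 : s ≤ 1) (hβ₁ : -1 ≤ β) (hβ₂ : β ≤ 1)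
    (hβ : β ≠ 0) :
    0 ≤ (β + 1) * s ^ β - (β - 1) * (β + 1) * ((1 - s ^ β) / β)
        - 2 * β * s + (β - 1) * (1 + β * (1 - s)) := by
  set E : ℝ := (β + 1) * s ^ β - (β - 1) * (β + 1) * ((1 - s ^ β) / β)
      - 2 * β * s + (β - 1) * (1 + β * (1 - s)) with hEdef
  have key : β * E = (β + 1) * ((2 * β - 1) * s ^ β + (β - 1) ^ 2 - β ^ 2 * s) := by
    rw [hEdef]
    field_simp
    ring
  rcases lt_or_gt_of_ne hβ with hneg | hpos
  · have hH := H_nonpos hs0 hs1 hβ₁ hneg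
    by_contra hc
    push_neg at hc
    have h1 : 0 < β * E := mul_pos_of_neg_of_neg hneg hc
    nlinarith [mul_nonneg (by linarith : (0:ℝ) ≤ β + 1) (neg_nonneg.mpr hH)]
  · have hH := H_nonneg hs0 hs1 hpos hβ₂
    have h1 : 0 ≤ β * E := key ▸ mul_nonneg (by linarith) hH
    by_contra hc
    push_neg at hc
    have := mul_neg_of_pos_of_neg hpos hc
    linarith

/-- The key pointwise inequality for the derivative of `F`. -/
lemma K_nonneg (α : ℝ) (hα₁ : -2 ≤ α) (hα₂ : α ≤ 0) {y : ℝ} (hy0 : 0 ≤ y) (hy1 : y < 1) :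
    0 ≤ (α + 2) * (1 - y) ^ (α + 1) - α * (α + 2) * phi α y
        - 2 * (α + 1) * (1 - y) + α * (1 + (α + 1) * y) := by
  have hs0 : (0 : ℝ) < 1 - y := by linarith
  have hs1 : (1 : ℝ) - y ≤ 1 := by linarith
  rcases eq_or_ne α (-1) with h | h
  · subst h
    have : ((1 : ℝ) - y) ^ ((-1 : ℝ) + 1) = 1 := by
      rw [show (-1 : ℝ) + 1 = 0 by ring, Real.rpow_zero]
    rw [this]
    have := phi_nonneg (α := -1) hy0 hy1
    nlinarith
  · have hβ : α + 1 ≠ 0 := fun hc => h (by linarith)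
    have hphi : phi α y = (1 - (1 - y) ^ (α + 1)) / (α + 1) := phi_eq h hy0 hy1
    have haux := K_aux (s := 1 - y) (β := α + 1) hs0 hs1 (by linarith) (by linarith) hβ
    have heq : (α + 2) * (1 - y) ^ (α + 1) - α * (α + 2) * phi α y
        - 2 * (α + 1) * (1 - y) + α * (1 + (α + 1) * y)
        = (α + 1 + 1) * (1 - y) ^ (α + 1)
          - (α + 1 - 1) * (α + 1 + 1) * ((1 - (1 - y) ^ (α + 1)) / (α + 1))
          - 2 * (α + 1) * (1 - y) + (α + 1 - 1) * (1 + (α + 1) * (1 - (1 - y))) := by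
      rw [hphi]; ring
    rw [heq]
    exact haux

/-- The auxiliary function: half of the derivative of `g`. -/
noncomputable def F (α y : ℝ) : ℝ :=
  (α + 2) * phi α y * (1 - y) ^ α - (α + 1) * phi α y - (1 + (α + 1) * y) * (1 - y) ^ α + 1

lemma hasDerivAt_q {α y : ℝ} (hy1 : y < 1) :
    HasDerivAt (fun y : ℝ => (1 - y) ^ α) (α * (1 - y) ^ (α - 1) * (-1)) y := by
  have h1 : HasDerivAt (fun y : ℝ => 1 - y) (-1) y := by
    exact (hasDerivAt_id' y).const_sub 1
  have h2 : HasDerivAt (fun u : ℝ => u ^ α) (α * (1 - y) ^ (α - 1)) (1 - y) :=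
    Real.hasDerivAt_rpow_const (Or.inl (by linarith))
  exact h2.comp y h1

lemma hasDerivAt_F (α : ℝ) {y : ℝ} (hy1 : y < 1) :
    HasDerivAt (F α) ((1 - y) ^ (α - 1) *
      ((α + 2) * (1 - y) ^ (α + 1) - α * (α + 2) * phi α y
        - 2 * (α + 1) * (1 - y) + α * (1 + (α + 1) * y))) y := by
  have hs0 : (0 : ℝ) < 1 - y := by linarith
  have hp := hasDerivAt_phi (α := α) hy1
  have hq := hasDerivAt_q (α := α) hy1
  have hlin : HasDerivAt (fun y : ℝ => 1 + (α + 1) * y) (α + 1) y := by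
    have := ((hasDerivAt_id' y).const_mul (α + 1)).const_add 1
    rwa [mul_one] at this
  have hD : HasDerivAt (fun y : ℝ => (α + 2) * (phi α y * (1 - y) ^ α)
      - (α + 1) * phi α y - (1 + (α + 1) * y) * (1 - y) ^ α + 1)
      ((α + 2) * ((1 - y) ^ α * (1 - y) ^ α + phi α y * (α * (1 - y) ^ (α - 1) * (-1)))
        - (α + 1) * (1 - y) ^ α
        - ((α + 1) * (1 - y) ^ α + (1 + (α + 1) * y) * (α * (1 - y) ^ (α - 1) * (-1)))) y :=
    (((hp.mul hq).const_mul (α + 2)).sub (hp.const_mul (α + 1))).sub (hlin.mul hq) |>.add_const 1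
  have hfun : F α = fun y : ℝ => (α + 2) * (phi α y * (1 - y) ^ α)
      - (α + 1) * phi α y - (1 + (α + 1) * y) * (1 - y) ^ α + 1 := by
    funext u
    simp only [F]
    ring
  rw [hfun]
  convert hD using 1
  have e1 : (1 - y) ^ α = (1 - y) ^ (α - 1) * (1 - y) := by
    rw [show α = (α - 1) + 1 by ring, Real.rpow_add_one hs0.ne']
    ring_nf
  have e2 : (1 - y) ^ (α + 1) = (1 - y) ^ (α - 1) * ((1 - y) * (1 - y)) := by
    rw [show α + 1 = ((α - 1) + 1) + 1 by ring, Real.rpow_add_one hs0.ne',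
      Real.rpow_add_one hs0.ne']
    ring_nf
  rw [e1, e2]
  ring

lemma F_zero (α : ℝ) : F α 0 = 0 := by
  have h0 : phi α 0 = 0 := intervalIntegral.integral_same
  simp [F, h0]

lemma F_nonneg (α : ℝ) (hα₁ : -2 ≤ α) (hα₂ : α ≤ 0) {x : ℝ} (hx0 : 0 ≤ x) (hx1 : x < 1) :
    0 ≤ F α x := by
  have hmono : MonotoneOn (F α) (Icc 0 x) := by
    apply monotoneOn_of_hasDerivWithinAt_nonneg (convex_Icc 0 x)
      (f' := fun y => (1 - y) ^ (α - 1) *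
        ((α + 2) * (1 - y) ^ (α + 1) - α * (α + 2) * phi α y
          - 2 * (α + 1) * (1 - y) + α * (1 + (α + 1) * y)))
    · intro y hy
      exact (hasDerivAt_F α (lt_of_le_of_lt hy.2 hx1)).continuousAt.continuousWithinAt
    · intro y hy
      rw [interior_Icc] at hy
      exact (hasDerivAt_F α (by linarith [hy.2])).hasDerivWithinAt
    · intro y hy
      rw [interior_Icc] at hy
      have hy1 : y < 1 := by linarith [hy.2]
      exact mul_nonneg (Real.rpow_nonneg (by linarith) _)
        (K_nonneg α hα₁ hα₂ (le_of_lt hy.1) hy1)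
  have := hmono (Set.left_mem_Icc.mpr hx0) (Set.right_mem_Icc.mpr hx0) hx0
  rwa [F_zero α] at this

end G2Aux

open G2Aux in
/-- For `-2 ≤ α ≤ 0` and `x ∈ [0,1)`, `(α+2)φ(x)² - 2(1 + x + αx)φ(x) + 2x ≥ 0`. -/
theorem g2_nonneg (α : ℝ) (hα₁ : -2 ≤ α) (hα₂ : α ≤ 0)
    (x : ℝ) (hx : x ∈ Ico (0 : ℝ) 1) :
    0 ≤ (α + 2) * (phi α x) ^ 2 - 2 * (1 + x + α * x) * phi α x + 2 * x := by
  obtain ⟨hx0, hx1⟩ := hx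
  set g : ℝ → ℝ := fun y => (α + 2) * (phi α y) ^ 2 - 2 * (1 + y + α * y) * phi α y + 2 * y
    with hgdef
  have hg0 : g 0 = 0 := by
    have h0 : phi α 0 = 0 := intervalIntegral.integral_same
    simp [hgdef, h0]
  have hderiv : ∀ y : ℝ, y < 1 → HasDerivAt g (2 * F α y) y := by
    intro y hy1
    have hp := hasDerivAt_phi (α := α) hy1
    have hlin : HasDerivAt (fun y : ℝ => 1 + y + α * y) (1 + α) y := by
      have := ((hasDerivAt_id' y).const_add 1).add
        ((hasDerivAt_id' y).const_mul α)
      rwa [mul_one] at this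
    have hD : HasDerivAt (fun y : ℝ => (α + 2) * (phi α y) ^ 2
        - 2 * ((1 + y + α * y) * phi α y) + 2 * y)
        ((α + 2) * (2 * phi α y ^ 1 * (1 - y) ^ α)
          - 2 * ((1 + α) * phi α y + (1 + y + α * y) * (1 - y) ^ α) + 2) y := by
      have h1 : HasDerivAt (fun y => (α + 2) * (phi α y) ^ 2)
          ((α + 2) * (2 * phi α y ^ 1 * (1 - y) ^ α)) y := (hp.pow 2).const_mul (α + 2)
      have h2 : HasDerivAt (fun y => 2 * ((1 + y + α * y) * phi α y))
          (2 * ((1 + α) * phi α y + (1 + y + α * y) * (1 - y) ^ α)) y :=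
        (hlin.mul hp).const_mul 2
      have h3 : HasDerivAt (fun y : ℝ => 2 * y) 2 y := by
        simpa using (hasDerivAt_id y).const_mul (2 : ℝ)
      exact (h1.sub h2).add h3
    have hgfun : g = fun y : ℝ => (α + 2) * (phi α y) ^ 2
        - 2 * ((1 + y + α * y) * phi α y) + 2 * y := by
      funext u
      rw [hgdef]
      ring
    rw [hgfun]
    convert hD using 1
    simp only [F, pow_one]
    ring
  have hmono : MonotoneOn g (Icc 0 x) := by
    apply monotoneOn_of_hasDerivWithinAt_nonneg (convex_Icc 0 x) (f' := fun y => 2 * F α y)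
    · intro y hy
      exact (hderiv y (lt_of_le_of_lt hy.2 hx1)).continuousAt.continuousWithinAt
    · intro y hy
      rw [interior_Icc] at hy
      exact (hderiv y (by linarith [hy.2])).hasDerivWithinAt
    · intro y hy
      rw [interior_Icc] at hy
      have := F_nonneg α hα₁ hα₂ (le_of_lt hy.1) (by linarith [hy.2])
      linarith
  have := hmono (Set.left_mem_Icc.mpr hx0) (Set.right_mem_Icc.mpr hx0) hx0
  rw [hg0] at this
  exact this
end

section
/- Let −2 ≤ α ≤ 0 and x ∈ [0,1). Then φ(x)² − (1 + x + αx)φ(x) + x ≥ 0. -/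
open Real Set

/-- Bernoulli-type inequality, unified for `β ∈ [-1,1]`. -/
lemma bernoulli_key (β : ℝ) (hβ1 : -1 ≤ β) (hβ2 : β ≤ 1) {y : ℝ} (hy0 : 0 < y) (hy1 : y ≤ 1) :
    β * (y ^ β - 1) ≤ β ^ 2 * (y - 1) := by
  have hs : -1 ≤ y - 1 := by linarith
  rcases le_or_gt 0 β with hβ | hβ
  · have h := rpow_one_add_le_one_add_mul_self (s := y - 1) hs hβ hβ2
    rw [show (1 : ℝ) + (y - 1) = y by ring] at h
    nlinarith
  · have hb0 : (0 : ℝ) ≤ -β := by linarith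
    have hb1 : -β ≤ 1 := by linarith
    have h := rpow_one_add_le_one_add_mul_self (s := y - 1) hs hb0 hb1
    rw [show (1 : ℝ) + (y - 1) = y by ring] at h
    have hyb : 0 < y ^ β := Real.rpow_pos_of_pos hy0 β
    have hinv : y ^ (-β) * y ^ β = 1 := by
      rw [← Real.rpow_add hy0]; simp
    have hbs : 0 < 1 - β * (y - 1) := by
      nlinarith [mul_nonpos_of_nonneg_of_nonpos (by linarith : (0:ℝ) ≤ β + 1)
        (by linarith : y - 1 ≤ 0)]
    have h2 : 1 + β * (y - 1) ≤ y ^ β := by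
      nlinarith [mul_le_mul_of_nonneg_right h hyb.le, hbs, sq_nonneg (β * (y - 1)), hinv]
    nlinarith

/-- The key inequality `F(y) ≥ 0`. -/
lemma F_nonneg (β : ℝ) (hβ1 : -1 ≤ β) (hβ2 : β ≤ 1) {y : ℝ} (hy0 : 0 < y) (hy1 : y ≤ 1) :
    0 ≤ (1 - y ^ β) * (1 - y ^ β - β) + β ^ 2 * (1 - y) * y ^ β := by
  set F : ℝ → ℝ := fun z => (1 - z ^ β) * (1 - z ^ β - β) + β ^ 2 * (1 - z) * z ^ β with hFdef
  have hF1 : F 1 = 0 := by simp [hFdef]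
  have hderiv : ∀ z ∈ Ioo y 1, HasDerivAt F
      ((0 - β * z ^ (β - 1)) * (1 - z ^ β - β) + (1 - z ^ β) * (0 - β * z ^ (β - 1)) +
        ((β ^ 2 * (0 - 1)) * z ^ β + (β ^ 2 * (1 - z)) * (β * z ^ (β - 1)))) z := by
    intro z hz
    have hz0 : 0 < z := lt_trans hy0 hz.1
    have hu : HasDerivAt (fun z : ℝ => z ^ β) (β * z ^ (β - 1)) z :=
      Real.hasDerivAt_rpow_const (Or.inl hz0.ne')
    have h1 : HasDerivAt (fun z : ℝ => 1 - z ^ β) (0 - β * z ^ (β - 1)) z :=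
      (hasDerivAt_const z (1 : ℝ)).sub hu
    have h2 : HasDerivAt (fun z : ℝ => 1 - z ^ β - β) (0 - β * z ^ (β - 1)) z :=
      h1.sub_const β
    have h3 : HasDerivAt (fun z : ℝ => β ^ 2 * (1 - z)) (β ^ 2 * (0 - 1)) z :=
      ((hasDerivAt_const z (1 : ℝ)).sub (hasDerivAt_id z)).const_mul (β ^ 2)
    exact (h1.mul h2).add (h3.mul hu)
  have hcont : ContinuousOn F (Icc y 1) := by
    intro z hz
    have hz0 : 0 < z := lt_of_lt_of_le hy0 hz.1
    have hca : ContinuousAt (fun z : ℝ => z ^ β) z :=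
      Real.continuousAt_rpow_const z β (Or.inl hz0.ne')
    exact (((continuousAt_const.sub hca).mul ((continuousAt_const.sub hca).sub
      continuousAt_const)).add ((continuousAt_const.mul (continuousAt_const.sub
      continuousAt_id)).mul hca)).continuousWithinAt
  have hdnp : ∀ z ∈ interior (Icc y 1), deriv F z ≤ 0 := by
    intro z hz
    rw [interior_Icc] at hz
    have hz0 : 0 < z := lt_trans hy0 hz.1
    have hz1 : z < 1 := hz.2
    rw [(hderiv z hz).deriv]
    have hA : 0 < z ^ β := Real.rpow_pos_of_pos hz0 β
    have hB := bernoulli_key β hβ1 hβ2 hz0 hz1.le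
    have hzb : z ^ (β - 1) = z ^ β / z := Real.rpow_sub_one hz0.ne' β
    rw [hzb]
    set A := z ^ β with hAdef
    have hzD : z * ((0 - β * (A / z)) * (1 - A - β) + (1 - A) * (0 - β * (A / z)) +
        ((β ^ 2 * (0 - 1)) * A + (β ^ 2 * (1 - z)) * (β * (A / z))))
        = A * (2 * β * (A - 1) + β ^ 2 * (1 + β) * (1 - z)) := by
      field_simp
      ring
    have hinner : 2 * β * (A - 1) + β ^ 2 * (1 + β) * (1 - z) ≤ 0 := by
      nlinarith [mul_nonneg (mul_nonneg (sq_nonneg β) (by linarith : (0:ℝ) ≤ 1 - z))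
        (by linarith : (0:ℝ) ≤ 1 - β)]
    have key : z * ((0 - β * (A / z)) * (1 - A - β) + (1 - A) * (0 - β * (A / z)) +
        ((β ^ 2 * (0 - 1)) * A + (β ^ 2 * (1 - z)) * (β * (A / z)))) ≤ 0 := by
      rw [hzD]
      exact mul_nonpos_of_nonneg_of_nonpos hA.le hinner
    nlinarith [key, hz0]
  have hdiff : DifferentiableOn ℝ F (interior (Icc y 1)) := by
    intro z hz
    rw [interior_Icc] at hz
    exact ((hderiv z hz).differentiableAt).differentiableWithinAt
  have hanti : AntitoneOn F (Icc y 1) :=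
    antitoneOn_of_deriv_nonpos (convex_Icc y 1) hcont hdiff hdnp
  have := hanti (left_mem_Icc.mpr hy1) (right_mem_Icc.mpr hy1) hy1
  rw [hF1] at this
  exact this

lemma phi_closed (α x : ℝ) (hx : x ∈ Ico (0 : ℝ) 1) (hne : α ≠ -1) :
    phi α x = (1 - (1 - x) ^ (α + 1)) / (α + 1) := by
  have h1x : 0 < 1 - x := by linarith [hx.2]
  unfold phi
  rw [intervalIntegral.integral_comp_sub_left (fun s : ℝ => s ^ α) 1]
  rw [integral_rpow (Or.inr ⟨hne, Set.notMem_uIcc_of_lt (by linarith) (by norm_num)⟩)]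
  rw [sub_zero, Real.one_rpow]

lemma phi_neg_one (x : ℝ) (hx : x ∈ Ico (0 : ℝ) 1) :
    phi (-1) x = -Real.log (1 - x) := by
  have h1x : 0 < 1 - x := by linarith [hx.2]
  unfold phi
  rw [intervalIntegral.integral_comp_sub_left (fun s : ℝ => s ^ (-1 : ℝ)) 1]
  simp only [Real.rpow_neg_one, sub_zero]
  rw [integral_inv (Set.notMem_uIcc_of_lt (by linarith) (by norm_num))]
  rw [show (1 : ℝ) / (1 - x) = (1 - x)⁻¹ by rw [one_div], Real.log_inv]

/-- For `-2 ≤ α ≤ 0` and `x ∈ [0,1)`, `φ(x)² - (1 + x + αx)φ(x) + x ≥ 0`. -/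
theorem g3_nonneg (α : ℝ) (hα₁ : -2 ≤ α) (hα₂ : α ≤ 0)
    (x : ℝ) (hx : x ∈ Ico (0 : ℝ) 1) :
    0 ≤ (phi α x) ^ 2 - (1 + x + α * x) * phi α x + x := by
  have hx0 : 0 ≤ x := hx.1
  have h1x : 0 < 1 - x := by linarith [hx.2]
  by_cases hne : α = -1
  · subst hne
    rw [phi_neg_one x hx]
    set L := -Real.log (1 - x) with hL
    have hLnn : 0 ≤ L := by
      have := Real.log_nonpos (by linarith) (by linarith : 1 - x ≤ 1)
      simp [hL]; linarith
    have hexp : Real.exp (-L) = 1 - x := by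
      rw [hL, neg_neg, Real.exp_log h1x]
    have h2 : 1 + L ≤ Real.exp L := by linarith [Real.add_one_le_exp L]
    have h3 : Real.exp L * (1 - x) = 1 := by
      rw [← hexp, ← Real.exp_add]; simp
    have h4 : (1 + L) * (1 - x) ≤ 1 := by
      calc (1 + L) * (1 - x) ≤ Real.exp L * (1 - x) :=
            mul_le_mul_of_nonneg_right h2 h1x.le
        _ = 1 := h3
    have h5 : x ≤ L := by
      have := Real.add_one_le_exp (-L)
      rw [hexp] at this; linarith
    nlinarith [mul_nonneg hLnn (by linarith : (0:ℝ) ≤ L - x), h4]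
  · have hβ : α + 1 ≠ 0 := fun h => hne (by linarith)
    rw [phi_closed α x hx hne]
    have hk := F_nonneg (α + 1) (by linarith) (by linarith) h1x (by linarith)
    have heq : ((1 - (1 - x) ^ (α + 1)) / (α + 1)) ^ 2 -
        (1 + x + α * x) * ((1 - (1 - x) ^ (α + 1)) / (α + 1)) + x =
        ((1 - (1 - x) ^ (α + 1)) * (1 - (1 - x) ^ (α + 1) - (α + 1)) +
          (α + 1) ^ 2 * (1 - (1 - x)) * (1 - x) ^ (α + 1)) / (α + 1) ^ 2 := by
      field_simp
      ring
    rw [heq]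
    exact div_nonneg hk (by positivity)
end

section
/- Let −2 ≤ α ≤ 0 and let M be a positive differentiable function on (0,1) with M′(x) > 0 for all x ∈ (0,1). Then B(x)² − 4A(x)C(x) > 0 for all x ∈ (0,1). -/
open Real Set

/-- `A(x) = (φ(x) - x)/φ(x)²`. -/
noncomputable def Afun (α : ℝ) (x : ℝ) : ℝ := (phi α x - x) / (phi α x) ^ 2

/-- `B(x) = (1 - x - αx) + x(1-x)M'(x)/M(x)`. -/
noncomputable def Bfun (α : ℝ) (M : ℝ → ℝ) (x : ℝ) : ℝ :=
  (1 - x - α * x) + x * (1 - x) * deriv M x / M x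

/-- `C(x) = x(1-x)^{α+1}`. -/
noncomputable def Cfun (α : ℝ) (x : ℝ) : ℝ := x * (1 - x) ^ (α + 1)

lemma phi_key (α : ℝ) (x : ℝ) (hx0 : 0 < x) (hx1 : x < 1) :
    (α + 1) * phi α x = 1 - (1 - x) ^ (α + 1) := by
  rcases eq_or_ne α (-1) with h | h
  · simp [h, Real.rpow_zero]
  · have h0 : (0:ℝ) ∉ Set.uIcc (1 - x) 1 := by
      rw [Set.mem_uIcc]
      push_neg
      constructor <;> intro h' <;> linarith
    have : phi α x = ∫ u in (1 - x)..(1:ℝ), u ^ α := by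
      rw [phi]
      rw [show (fun t : ℝ => (1 - t) ^ α) = (fun u : ℝ => u ^ α) ∘ (fun t => 1 - t) from rfl]
      have := intervalIntegral.integral_comp_sub_left (a := 0) (b := x)
        (fun u : ℝ => u ^ α) 1
      simpa [Function.comp_def] using this
    rw [this, integral_rpow (Or.inr ⟨h, h0⟩)]
    have hα1 : α + 1 ≠ 0 := by
      intro h'; apply h; linarith
    field_simp
    rw [Real.one_rpow]

lemma phi_ge (α : ℝ) (hα : α ≤ 0) (x : ℝ) (hx0 : 0 < x) (hx1 : x < 1) :
    x ≤ phi α x := by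
  have hint : IntervalIntegrable (fun t : ℝ => (1 - t) ^ α) MeasureTheory.volume 0 x := by
    apply ContinuousOn.intervalIntegrable
    apply ContinuousOn.rpow_const (by fun_prop)
    intro t ht
    rw [Set.uIcc_of_le hx0.le] at ht
    left
    have := ht.2
    intro h'
    nlinarith
  have hmono := intervalIntegral.integral_mono_on (μ := MeasureTheory.volume)
    (f := fun _ : ℝ => (1:ℝ)) (g := fun t : ℝ => (1 - t) ^ α) hx0.le
    (intervalIntegrable_const) hint ?_
  · simpa [phi] using hmono
  · intro t ht
    have h1 : 0 < 1 - t := by nlinarith [ht.2]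
    have h2 : 1 - t ≤ 1 := by nlinarith [ht.1]
    exact Real.one_le_rpow_of_pos_of_le_one_of_nonpos h1 h2 hα

/-- For `-2 ≤ α ≤ 0` and `M` positive differentiable on `(0,1)` with `M' > 0`,
one has `B² - 4AC > 0` on `(0,1)`. -/
theorem discriminant_pos (α : ℝ) (hα₁ : -2 ≤ α) (hα₂ : α ≤ 0) (M : ℝ → ℝ)
    (hpos : ∀ x ∈ Ioo (0 : ℝ) 1, 0 < M x)
    (hd : ∀ x ∈ Ioo (0 : ℝ) 1, DifferentiableAt ℝ M x)
    (hd' : ∀ x ∈ Ioo (0 : ℝ) 1, 0 < deriv M x)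
    (x : ℝ) (hx : x ∈ Ioo (0 : ℝ) 1) :
    0 < (Bfun α M x) ^ 2 - 4 * Afun α x * Cfun α x := by
  obtain ⟨hx0, hx1⟩ := hx
  set p := phi α x with hp
  have hpx : x ≤ p := phi_ge α hα₂ x hx0 hx1
  have hp0 : 0 < p := lt_of_lt_of_le hx0 hpx
  have hb : 0 < x * (1 - x) ^ (α + 1) :=
    mul_pos hx0 (Real.rpow_pos_of_pos (by linarith) _)
  have hkey : (1 - x - α * x) * p = (p - x) + x * (1 - x) ^ (α + 1) := by
    have h := phi_key α x hx0 hx1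
    have : x * ((α + 1) * p) = x * (1 - (1 - x) ^ (α + 1)) := by rw [h]
    nlinarith [this]
  have hε : 0 < x * (1 - x) * deriv M x / M x := by
    apply div_pos
    · apply mul_pos (mul_pos hx0 (by linarith)) (hd' x ⟨hx0, hx1⟩)
    · exact hpos x ⟨hx0, hx1⟩
  set ε := x * (1 - x) * deriv M x / M x
  set a := p - x with ha
  set b := x * (1 - x) ^ (α + 1) with hbdef
  have ha0 : 0 ≤ a := by simp [ha]; linarith
  have hB0 : 0 < 1 - x - α * x := by
    have : (1 - x - α * x) * p = a + b := hkey
    nlinarith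
  rw [Bfun, Afun, Cfun, ← hp, ← hbdef]
  have hAle : (p - x) / p ^ 2 * b ≤ ((1 - x - α * x) / 2) ^ 2 := by
    rw [div_mul_eq_mul_div, div_le_iff₀ (by positivity)]
    nlinarith [sq_nonneg (a - b), sq_nonneg p, hkey]
  nlinarith [hε, hB0, hAle, sq_nonneg ε]
end
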